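/- Let g be a random vector in ℝ^d with ‖E[g]‖ ≤ L and E[‖g - E[g]‖^p] ≤ σ^p for some p ∈ (1,2]. Let ĝ = min{1, τ/‖g‖}·g (with ĝ = 0 if g = 0) for clipping parameter τ > 0. Then E[‖ĝ‖^2] ≤ 2^{p-1} τ^{2-p} (σ^p + L^p). -/

import Mathlib

open Classical

open MeasureTheory

/-- The clipping operator: clip(v, τ) = min{1, τ/‖v‖}·v for v ≠ 0, and 0 for v = 0. -/
noncomputable def clip {d : ℕ} (τ : ℝ) (v : EuclideanSpace ℝ (Fin d)) :
    EuclideanSpace ℝ (Fin d) :=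
  if v = 0 then 0 else (min 1 (τ / ‖v‖)) • v

lemma norm_clip {d : ℕ} {τ : ℝ} (hτ : 0 < τ) (v : EuclideanSpace ℝ (Fin d)) :
    ‖clip τ v‖ = min ‖v‖ τ := by
  unfold clip
  split_ifs with h
  · simp [h, min_eq_left hτ.le]
  · have hv : (0:ℝ) < ‖v‖ := norm_pos_iff.mpr h
    have hmin : (0:ℝ) ≤ min 1 (τ / ‖v‖) :=
      le_min zero_le_one (div_nonneg hτ.le hv.le)
    rw [norm_smul, Real.norm_eq_abs, abs_of_nonneg hmin, min_mul_of_nonneg _ _ hv.le,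
      one_mul, div_mul_cancel₀ _ hv.ne', min_comm]

lemma two_rpow_aux {a b p : ℝ} (ha : 0 ≤ a) (hb : 0 ≤ b) (hp : 1 ≤ p) :
    (a + b) ^ p ≤ 2 ^ (p - 1) * (a ^ p + b ^ p) := by
  lift a to NNReal using ha
  lift b to NNReal using hb
  have := NNReal.rpow_add_le_mul_rpow_add_rpow a b hp
  exact_mod_cast this

/-- Second-moment bound for the clipped random vector:
E[‖ĝ‖²] ≤ 2^{p-1} τ^{2-p} (σ^p + L^p). -/
theorem stmt4 {d : ℕ} {Ω : Type*} [MeasurableSpace Ω]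
    (μ : Measure Ω) [IsProbabilityMeasure μ]
    (g : Ω → EuclideanSpace ℝ (Fin d)) (hg : Integrable g μ)
    (L σ τ p : ℝ) (hp1 : 1 < p) (hp2 : p ≤ 2)
    (hL : 0 < L) (hσ : 0 < σ) (hτ : 0 < τ)
    (hmean : ‖∫ ω, g ω ∂μ‖ ≤ L)
    (hmomInt : Integrable (fun ω => ‖g ω - ∫ ω', g ω' ∂μ‖ ^ p) μ)
    (hmom : ∫ ω, ‖g ω - ∫ ω', g ω' ∂μ‖ ^ p ∂μ ≤ σ ^ p) :
    ∫ ω, ‖clip τ (g ω)‖ ^ 2 ∂μ ≤ 2 ^ (p - 1) * τ ^ (2 - p) * (σ ^ p + L ^ p) := by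
  set m : EuclideanSpace ℝ (Fin d) := ∫ ω', g ω' ∂μ with hm
  have h2p : (0:ℝ) ≤ 2 - p := by linarith
  have hc : (0:ℝ) ≤ 2 ^ (p - 1) := Real.rpow_nonneg (by norm_num) _
  have hτp : (0:ℝ) ≤ τ ^ (2 - p) := Real.rpow_nonneg hτ.le _
  -- pointwise bound
  have key : ∀ ω, ‖clip τ (g ω)‖ ^ 2 ≤
      2 ^ (p - 1) * τ ^ (2 - p) * (‖g ω - m‖ ^ p + L ^ p) := by
    intro ω
    have h1 : ‖clip τ (g ω)‖ ^ 2 ≤ τ ^ (2 - p) * ‖g ω‖ ^ p := by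
      rw [norm_clip hτ]
      set s := min ‖g ω‖ τ with hs
      have hs0 : 0 ≤ s := le_min (norm_nonneg _) hτ.le
      rcases eq_or_lt_of_le hs0 with h0 | h0
      · rw [← h0]
        simpa using mul_nonneg hτp (Real.rpow_nonneg (norm_nonneg _) _)
      · have : s ^ (2:ℝ) = s ^ (2 - p) * s ^ p := by
          rw [← Real.rpow_add h0]; ring_nf
        calc s ^ 2 = s ^ (2:ℝ) := by
              rw [Real.rpow_two]
          _ = s ^ (2 - p) * s ^ p := this
          _ ≤ τ ^ (2 - p) * ‖g ω‖ ^ p := by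
              apply mul_le_mul
              · exact Real.rpow_le_rpow hs0 (min_le_right _ _) h2p
              · exact Real.rpow_le_rpow hs0 (min_le_left _ _) (by linarith)
              · exact Real.rpow_nonneg hs0 _
              · exact hτp
    have h2 : ‖g ω‖ ^ p ≤ 2 ^ (p - 1) * (‖g ω - m‖ ^ p + L ^ p) := by
      have hle : ‖g ω‖ ≤ ‖g ω - m‖ + ‖m‖ := by
        simpa using norm_add_le (g ω - m) m
      calc ‖g ω‖ ^ p ≤ (‖g ω - m‖ + ‖m‖) ^ p :=
            Real.rpow_le_rpow (norm_nonneg _) hle (by linarith)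
        _ ≤ 2 ^ (p - 1) * (‖g ω - m‖ ^ p + ‖m‖ ^ p) :=
            two_rpow_aux (norm_nonneg _) (norm_nonneg _) hp1.le
        _ ≤ 2 ^ (p - 1) * (‖g ω - m‖ ^ p + L ^ p) := by
            gcongr
    calc ‖clip τ (g ω)‖ ^ 2 ≤ τ ^ (2 - p) * ‖g ω‖ ^ p := h1
      _ ≤ τ ^ (2 - p) * (2 ^ (p - 1) * (‖g ω - m‖ ^ p + L ^ p)) := by
          exact mul_le_mul_of_nonneg_left h2 hτp
      _ = 2 ^ (p - 1) * τ ^ (2 - p) * (‖g ω - m‖ ^ p + L ^ p) := by ring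
  have hInt : Integrable (fun ω => 2 ^ (p - 1) * τ ^ (2 - p) * (‖g ω - m‖ ^ p + L ^ p)) μ := by
    exact ((hmomInt.add (integrable_const _)).const_mul _)
  calc ∫ ω, ‖clip τ (g ω)‖ ^ 2 ∂μ
      ≤ ∫ ω, 2 ^ (p - 1) * τ ^ (2 - p) * (‖g ω - m‖ ^ p + L ^ p) ∂μ := by
        apply integral_mono_of_nonneg
        · exact Filter.Eventually.of_forall fun ω => sq_nonneg _
        · exact hInt
        · exact Filter.Eventually.of_forall key
    _ = 2 ^ (p - 1) * τ ^ (2 - p) * ((∫ ω, ‖g ω - m‖ ^ p ∂μ) + L ^ p) := by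
        rw [integral_const_mul, integral_add hmomInt (integrable_const _),
          integral_const, probReal_univ]
        simp
    _ ≤ 2 ^ (p - 1) * τ ^ (2 - p) * (σ ^ p + L ^ p) := by
        gcongr
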